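/- Let A ∈ L(X), Δ ⊆ L(X) a unital C*-subalgebra with commutant D_Δ, and define μ̂_Δ(A) = inf{γ > 0 : ‖Q⁻¹AQ‖ < γ for some invertible Q ∈ D_Δ}. Then μ_Δ(A) ≤ μ̂_Δ(A). -/
import Mathlib


open Matrix
open scoped Classical

set_option maxHeartbeats 1000000 in
set_option synthInstance.maxHeartbeats 200000 in
/-- The structured singular value is bounded above by its scaled-norm upper
bound: `μ_Δ(A) ≤ μ̂_Δ(A)`, where
`μ̂_Δ(A) = inf { γ > 0 : ‖Q⁻¹ A Q‖ < γ for some invertible Q in the commutant of Δ }`. -/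
theorem mu_le_muhat {n : Type*} [Fintype n] [DecidableEq n]
    (A : Matrix n n ℂ) (Δ : StarSubalgebra ℂ (Matrix n n ℂ))
    (s : Set ℝ)
    (hs : s = {r : ℝ | ∃ δ ∈ Δ, ‖Matrix.toEuclideanCLM (𝕜 := ℂ) δ‖ = r ∧
      ¬ IsUnit (1 - δ * A)})
    (μ : ℝ) (hμ : μ = if s.Nonempty then 1 / sInf s else 0)
    (μhat : ℝ)
    (hμhat : μhat = sInf {γ : ℝ | 0 < γ ∧ ∃ Q : Matrix n n ℂ,
      (∀ δ ∈ Δ, δ * Q = Q * δ) ∧ IsUnit Q ∧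
        ‖Matrix.toEuclideanCLM (𝕜 := ℂ) (Q⁻¹ * A * Q)‖ < γ}) :
    μ ≤ μhat := by
  set f := Matrix.toEuclideanCLM (𝕜 := ℂ) (n := n)
  set T : Set ℝ := {γ : ℝ | 0 < γ ∧ ∃ Q : Matrix n n ℂ,
      (∀ δ ∈ Δ, δ * Q = Q * δ) ∧ IsUnit Q ∧ ‖f (Q⁻¹ * A * Q)‖ < γ} with hT
  have hTne : T.Nonempty := by
    refine ⟨‖f A‖ + 1, by linarith [norm_nonneg (f A)], 1,
      fun δ _ => by rw [one_mul, mul_one], isUnit_one, ?_⟩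
    rw [inv_one, one_mul, mul_one]
    linarith
  rw [hμhat]
  refine le_csInf hTne ?_
  rintro γ ⟨hγpos, Q, hQcomm, hQunit, hQnorm⟩
  rw [hμ]
  split_ifs with hsne
  · -- s nonempty
    have key : ∀ r ∈ s, 1 / γ ≤ r := by
      intro r hr
      rw [hs] at hr
      obtain ⟨δ, hδΔ, hδn, hδu⟩ := hr
      by_contra hlt
      push_neg at hlt
      apply hδu
      have hQinv : IsUnit Q⁻¹ := by
        have he : (↑hQunit.unit⁻¹ : Matrix n n ℂ) = Q⁻¹ := by
          rw [Matrix.coe_units_inv, hQunit.unit_spec]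
        exact he ▸ (hQunit.unit⁻¹).isUnit
      have h1 : Q * Q⁻¹ = 1 := Matrix.mul_nonsing_inv Q
        ((Matrix.isUnit_iff_isUnit_det Q).mp hQunit)
      have h2 : Q⁻¹ * Q = 1 := Matrix.nonsing_inv_mul Q
        ((Matrix.isUnit_iff_isUnit_det Q).mp hQunit)
      have hcomm : δ * Q = Q * δ := hQcomm δ hδΔ
      have hcomm' : Q * δ * Q⁻¹ = δ := by
        rw [← hcomm, mul_assoc, h1, mul_one]
      have hid : Q * (1 - δ * (Q⁻¹ * A * Q)) * Q⁻¹ = 1 - δ * A := by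
        calc Q * (1 - δ * (Q⁻¹ * A * Q)) * Q⁻¹
            = Q * Q⁻¹ - (Q * δ * Q⁻¹) * A * (Q * Q⁻¹) := by noncomm_ring
          _ = 1 - δ * A := by rw [h1, hcomm', mul_one]
      rw [← hid]
      refine (hQunit.mul ?_).mul hQinv
      -- 1 - δ * (Q⁻¹AQ) is a unit: transfer via f
      have hnorm : ‖f δ * f (Q⁻¹ * A * Q)‖ < 1 := by
        calc ‖f δ * f (Q⁻¹ * A * Q)‖
            ≤ ‖f δ‖ * ‖f (Q⁻¹ * A * Q)‖ := norm_mul_le _ _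
          _ < (1 / γ) * γ :=
              mul_lt_mul'' (hδn ▸ hlt) hQnorm (norm_nonneg _) (norm_nonneg _)
          _ = 1 := by field_simp
      have hu : IsUnit (f (1 - δ * (Q⁻¹ * A * Q))) := by
        rw [map_sub, _root_.map_one, _root_.map_mul]
        exact (Units.oneSub _ hnorm).isUnit
      have h3 := hu.map (Matrix.toEuclideanCLM (𝕜 := ℂ) (n := n)).symm
      rwa [StarAlgEquiv.symm_apply_apply] at h3
    have h1γ : (0:ℝ) < 1 / γ := by positivity
    have hle : 1 / γ ≤ sInf s := le_csInf hsne key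
    calc 1 / sInf s ≤ 1 / (1 / γ) := one_div_le_one_div_of_le h1γ hle
      _ = γ := one_div_one_div γ
  · exact le_of_lt hγpos
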